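/- For every χ ∈ (0,1): χ^{−1/2} · ∫_{1−χ}^1 ζ^{1/2} (ζ−1+χ)^{−1/4} (1−ζ)^{−1/4} dζ = (2·Γ(3/4)²/√π)·₂F₁(−1/2, 3/4; 3/2; χ). -/

import Mathlib

/-- The Gauss hypergeometric series `₂F₁(a,b;c;z) = Σ_n (a)_n (b)_n / ((c)_n n!) · zⁿ`,
where `(a)_n` is the rising factorial (Pochhammer symbol). -/
noncomputable def hyp2F1 (a b c z : ℝ) : ℝ :=
  ∑' n : ℕ, ((ascPochhammer ℝ n).eval a * (ascPochhammer ℝ n).eval b /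
      ((ascPochhammer ℝ n).eval c * (n.factorial : ℝ))) * z ^ n

/-- `B(χ) := ∫_{1−χ}^1 ζ^{1/2} (ζ−1+χ)^{−1/4} (1−ζ)^{−1/4} dζ`. -/
noncomputable def Bint (χ : ℝ) : ℝ :=
  ∫ ζ in (1 - χ)..1, ζ ^ ((1/2) : ℝ) * (ζ - 1 + χ) ^ (-(1/4) : ℝ) * (1 - ζ) ^ (-(1/4) : ℝ)

section SLEaux
open Polynomial Real MeasureTheory intervalIntegral Set Finset


lemma asc_succ (x : ℝ) (n : ℕ) :
    (ascPochhammer ℝ (n+1)).eval x = (ascPochhammer ℝ n).eval x * (x + n) := by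
  rw [ascPochhammer_succ_right]
  simp [Polynomial.eval_mul]

lemma asc_pos {x : ℝ} (hx : 0 < x) : ∀ n : ℕ, 0 < (ascPochhammer ℝ n).eval x := by
  intro n
  induction n with
  | zero => simp
  | succ n ih =>
    rw [asc_succ]
    exact mul_pos ih (by positivity)

lemma Gamma_asc {x : ℝ} (hx : 0 < x) (n : ℕ) :
    Real.Gamma (x + n) = (ascPochhammer ℝ n).eval x * Real.Gamma x := by
  induction n with
  | zero => simp
  | succ n ih =>
    have : x + (n + 1 : ℕ) = (x + n) + 1 := by push_cast; ring
    rw [this, Real.Gamma_add_one (by positivity), ih, asc_succ]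
    ring


lemma desc_smeval_eq_eval (r : ℝ) (n : ℕ) :
    (descPochhammer ℤ n).smeval r = (descPochhammer ℝ n).eval r := by
  induction n with
  | zero => simp [descPochhammer_zero, smeval_one]
  | succ n ih =>
    rw [descPochhammer_succ_right, descPochhammer_succ_right, smeval_mul, ih, smeval_sub,
      smeval_X, smeval_natCast]
    simp [Polynomial.eval_mul]

lemma ring_choose_eq (r : ℝ) (n : ℕ) :
    Ring.choose r n = (descPochhammer ℝ n).eval r / n.factorial := by
  have h := Ring.descPochhammer_eq_factorial_smul_choose r n
  rw [desc_smeval_eq_eval, nsmul_eq_mul] at h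
  field_simp [Nat.factorial_ne_zero] at h ⊢
  linarith [h]


noncomputable def cc (n : ℕ) : ℝ := (ascPochhammer ℝ n).eval (-(1/2)) / n.factorial


lemma cc_zero : cc 0 = 1 := by simp [cc]

lemma cc_succ (n : ℕ) : cc (n+1) = cc n * ((n : ℝ) - 1/2) / (n+1) := by
  rw [cc, cc, asc_succ, Nat.factorial_succ]
  push_cast
  field_simp
  ring

lemma cc_abs_le (n : ℕ) : |cc n| ≤ 1 := by
  induction n with
  | zero => simp [cc_zero]
  | succ n ih =>
    rw [cc_succ, abs_div, abs_mul]
    have h1 : |(n : ℝ) - 1/2| ≤ (n : ℝ) + 1 := by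
      rw [abs_le]; constructor <;> [push_cast; push_cast] <;> nlinarith [Nat.cast_nonneg (α := ℝ) n]
    have h2 : |((n : ℝ) + 1)| = (n : ℝ) + 1 := abs_of_pos (by positivity)
    rw [h2, div_le_one (by positivity)]
    calc |cc n| * |(n:ℝ) - 1/2| ≤ 1 * ((n:ℝ)+1) := mul_le_mul ih h1 (abs_nonneg _) zero_le_one
      _ = (n:ℝ)+1 := one_mul _

lemma cc_succ_nonpos (n : ℕ) : cc (n+1) ≤ 0 := by
  induction n with
  | zero => rw [cc_succ]; norm_num [cc_zero]
  | succ n ih =>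
    rw [cc_succ]
    apply div_nonpos_of_nonpos_of_nonneg _ (by positivity)
    apply mul_nonpos_of_nonpos_of_nonneg ih
    push_cast; linarith [Nat.cast_nonneg (α := ℝ) n]

lemma cc_sum (N : ℕ) : ∑ n ∈ range (N+1), cc n = -2 * (N+1) * cc (N+1) := by
  induction N with
  | zero => rw [Finset.sum_range_one, cc_zero, cc_succ]; norm_num [cc_zero]
  | succ N ih =>
    rw [Finset.sum_range_succ, ih, cc_succ (N+1)]
    push_cast
    field_simp
    ring

lemma cc_abs_sum (N : ℕ) : ∑ n ∈ range N, |cc (n+1)| ≤ 1 := by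
  have h : ∀ n, |cc (n+1)| = -cc (n+1) := fun n => abs_of_nonpos (cc_succ_nonpos n)
  simp_rw [h]
  have h2 : ∑ n ∈ range (N+1), cc n = ∑ n ∈ range N, cc (n+1) + cc 0 := Finset.sum_range_succ' _ _
  rw [cc_sum] at h2
  rw [Finset.sum_neg_distrib]
  have hc := cc_succ_nonpos N
  have : (0:ℝ) ≤ (N:ℝ) + 1 := by positivity
  rw [cc_zero] at h2
  nlinarith

lemma cc_abs_summable : Summable (fun n => |cc (n+1)|) :=
  summable_of_sum_range_le (fun n => abs_nonneg _) cc_abs_sum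

lemma cc_abs_tsum_le : ∑' n, |cc (n+1)| ≤ 1 :=
  Summable.tsum_le_of_sum_range_le cc_abs_summable cc_abs_sum




lemma cc_eq_choose (n : ℕ) : cc n = (-1)^n * Ring.choose (1/2 : ℝ) n := by
  rw [ring_choose_eq, cc, ascPochhammer_eval_neg_eq_descPochhammer, mul_div_assoc]

lemma vandermonde (n : ℕ) :
    ∑ ij ∈ antidiagonal n, cc ij.1 * cc ij.2 = (-1)^n * (Nat.choose 1 n : ℝ) := by
  have h : Commute (1/2 : ℝ) (1/2) := Commute.refl _
  have hv := Ring.add_choose_eq (R := ℝ) (r := 1/2) (s := 1/2) n h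
  norm_num at hv
  have h1 : Ring.choose (1 : ℝ) n = (Nat.choose 1 n : ℝ) := by
    rw [show (1:ℝ) = ((1:ℕ):ℝ) by norm_num, Ring.choose_natCast]
  rw [h1] at hv
  calc ∑ ij ∈ antidiagonal n, cc ij.1 * cc ij.2
      = ∑ ij ∈ antidiagonal n, (-1)^n * (Ring.choose (1/2:ℝ) ij.1 * Ring.choose (1/2:ℝ) ij.2) := by
        refine Finset.sum_congr rfl fun ij hij => ?_
        rw [cc_eq_choose, cc_eq_choose]
        rw [Finset.HasAntidiagonal.mem_antidiagonal] at hij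
        rw [← hij, pow_add]
        ring
    _ = (-1)^n * (Nat.choose 1 n : ℝ) := by rw [← Finset.mul_sum, ← hv]




lemma binom_summable_norm {x : ℝ} (hx : 0 ≤ x) (hx1 : x < 1) :
    Summable (fun n => ‖cc n * x^n‖) := by
  apply Summable.of_nonneg_of_le (fun n => norm_nonneg _) (fun n => ?_)
    (summable_geometric_of_lt_one hx hx1)
  rw [norm_mul, norm_pow]
  calc ‖cc n‖ * ‖x‖^n ≤ 1 * ‖x‖^n :=
        mul_le_mul_of_nonneg_right (cc_abs_le n) (by positivity)
    _ = x ^ n := by rw [one_mul, Real.norm_of_nonneg hx]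

lemma binom_sq {x : ℝ} (hx : 0 ≤ x) (hx1 : x < 1) :
    (∑' n, cc n * x^n) ^ 2 = 1 - x := by
  rw [sq, tsum_mul_tsum_eq_tsum_sum_antidiagonal_of_summable_norm
    (binom_summable_norm hx hx1) (binom_summable_norm hx hx1)]
  have key : ∀ n : ℕ, ∑ ij ∈ antidiagonal n, (cc ij.1 * x^ij.1) * (cc ij.2 * x^ij.2)
      = (-1)^n * (Nat.choose 1 n : ℝ) * x^n := by
    intro n
    rw [← vandermonde n, Finset.sum_mul]
    refine Finset.sum_congr rfl fun ij hij => ?_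
    rw [Finset.HasAntidiagonal.mem_antidiagonal] at hij
    rw [← hij, pow_add]
    ring
  simp_rw [key]
  rw [tsum_eq_sum (s := Finset.range 2) (fun n hn => ?_)]
  · norm_num [Finset.sum_range_succ]
    ring
  · rw [Finset.mem_range, not_lt] at hn
    have : Nat.choose 1 n = 0 := Nat.choose_eq_zero_of_lt (by omega)
    rw [this]; simp

lemma binom_hasSum {x : ℝ} (hx : 0 ≤ x) (hx1 : x < 1) :
    HasSum (fun n => cc n * x^n) ((1-x) ^ ((1:ℝ)/2 : ℝ)) := by
  have hsum : Summable (fun n => cc n * x^n) :=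
    (binom_summable_norm hx hx1).of_norm
  have hS : (∑' n, cc n * x^n) = (1-x) ^ ((1:ℝ)/2 : ℝ) := by
    have hpos : 0 < ∑' n, cc n * x^n := by
      rw [Summable.tsum_eq_zero_add hsum]
      have h1 : |∑' n, cc (n+1) * x^(n+1)| ≤ x := by
        have hsub : Summable (fun n => cc (n+1) * x^(n+1)) := by
          rw [← summable_nat_add_iff 1] at hsum; exact hsum
        calc |∑' n, cc (n+1) * x^(n+1)| ≤ ∑' n, |cc (n+1) * x^(n+1)| := by
              simpa only [Real.norm_eq_abs] using norm_tsum_le_tsum_norm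
                (f := fun n => cc (n+1) * x^(n+1)) hsub.abs
          _ ≤ ∑' n, |cc (n+1)| * x := by
              apply Summable.tsum_le_tsum _ hsub.abs (cc_abs_summable.mul_right x)
              intro n
              rw [abs_mul, abs_pow, abs_of_nonneg hx]
              apply mul_le_mul_of_nonneg_left _ (abs_nonneg _)
              calc x^(n+1) ≤ x^1 := pow_le_pow_of_le_one hx hx1.le (by omega)
                _ = x := pow_one x
          _ = (∑' n, |cc (n+1)|) * x := tsum_mul_right
          _ ≤ 1 * x := mul_le_mul_of_nonneg_right cc_abs_tsum_le hx
          _ = x := one_mul x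
      rw [cc_zero, pow_zero, mul_one]
      have := abs_le.mp h1
      linarith
    have hsq := binom_sq hx hx1
    have : ∑' n, cc n * x^n = Real.sqrt (1-x) := by
      rw [← hsq, Real.sqrt_sq hpos.le]
    rw [this, Real.rpow_def_of_pos (by linarith), Real.sqrt_eq_rpow]
    rw [Real.rpow_def_of_pos (by linarith)]
  exact hS ▸ hsum.hasSum


lemma betaIntegrable {p q : ℝ} (hp : 0 < p) (hq : 0 < q) :
    IntervalIntegrable (fun t => t ^ (p-1) * (1-t) ^ (q-1)) volume 0 1 := by
  have h1 : IntervalIntegrable (fun t => t ^ (p-1) * (1-t) ^ (q-1)) volume 0 (1/2) := by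
    apply IntervalIntegrable.mul_continuousOn
    · exact intervalIntegral.intervalIntegrable_rpow' (by linarith)
    · apply ContinuousOn.rpow_const (by fun_prop)
      intro t ht
      rw [Set.uIcc_of_le (by norm_num)] at ht
      left
      have := ht.2
      intro h; rw [sub_eq_zero] at h; linarith
  have h2 : IntervalIntegrable (fun t => t ^ (p-1) * (1-t) ^ (q-1)) volume (1/2) 1 := by
    apply IntervalIntegrable.continuousOn_mul
    · have hbase : IntervalIntegrable (fun t : ℝ => t ^ (q-1)) volume 0 (1/2) :=
        intervalIntegral.intervalIntegrable_rpow' (by linarith)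
      have := hbase.comp_sub_left 1
      norm_num at this
      exact this.symm
    · apply ContinuousOn.rpow_const (by fun_prop)
      intro t ht
      rw [Set.uIcc_of_le (by norm_num)] at ht
      left
      have := ht.1
      positivity
  exact h1.trans h2

lemma realBeta {p q : ℝ} (hp : 0 < p) (hq : 0 < q) :
    ∫ t in (0:ℝ)..1, t ^ (p-1) * (1-t) ^ (q-1)
      = Real.Gamma p * Real.Gamma q / Real.Gamma (p+q) := by
  have h := Complex.Gamma_mul_Gamma_eq_betaIntegral (s := (p:ℂ)) (t := (q:ℂ))
    (by simpa using hp) (by simpa using hq)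
  have hbeta : Complex.betaIntegral p q
      = ((∫ t in (0:ℝ)..1, t ^ (p-1) * (1-t) ^ (q-1) : ℝ) : ℂ) := by
    rw [Complex.betaIntegral, ← intervalIntegral.integral_ofReal]
    apply intervalIntegral.integral_congr
    intro x hx
    rw [Set.uIcc_of_le (by norm_num)] at hx
    push_cast
    rw [Complex.ofReal_cpow hx.1, Complex.ofReal_cpow (by linarith [hx.2] : (0:ℝ) ≤ 1 - x)]
    push_cast
    ring
  rw [hbeta, ← Complex.ofReal_add, Complex.Gamma_ofReal, Complex.Gamma_ofReal,
    Complex.Gamma_ofReal, ← Complex.ofReal_mul, ← Complex.ofReal_mul] at h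
  have h' := Complex.ofReal_inj.mp h
  have hG : Real.Gamma (p+q) ≠ 0 := (Real.Gamma_pos_of_pos (by linarith)).ne'
  field_simp
  linarith [h']



lemma subst {χ : ℝ} (hχ : χ ∈ Set.Ioo (0 : ℝ) 1) :
    χ ^ (-(1/2) : ℝ) * Bint χ
      = ∫ t in (0:ℝ)..1, t ^ (-(1/4):ℝ) * (1-t) ^ (-(1/4):ℝ) * (1 - χ*t) ^ ((1/2):ℝ) := by
  obtain ⟨h0, h1⟩ := hχ
  have hcomp := intervalIntegral.integral_comp_mul_add
    (a := 0) (b := 1) (c := -χ) (d := 1)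
    (f := fun ζ => ζ ^ ((1/2) : ℝ) * (ζ - 1 + χ) ^ (-(1/4) : ℝ) * (1 - ζ) ^ (-(1/4) : ℝ))
    (neg_ne_zero.mpr h0.ne')
  rw [show -χ * 0 + 1 = 1 by ring, show -χ * 1 + 1 = 1 - χ by ring,
    intervalIntegral.integral_symm (1 - χ) 1, smul_eq_mul] at hcomp
  set J := ∫ x in (0:ℝ)..1, (-χ * x + 1) ^ ((1/2) : ℝ)
      * (-χ * x + 1 - 1 + χ) ^ (-(1/4) : ℝ) * (1 - (-χ * x + 1)) ^ (-(1/4) : ℝ) with hJ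
  set T := ∫ t in (0:ℝ)..1, t ^ (-(1/4):ℝ) * (1-t) ^ (-(1/4):ℝ) * (1 - χ*t) ^ ((1/2):ℝ) with hT
  have hI : Bint χ = χ * J := by
    rw [Bint]
    have hne : χ ≠ 0 := h0.ne'
    field_simp at hcomp
    linarith
  have hcong : ∀ t ∈ Set.uIcc (0:ℝ) 1,
      (-χ * t + 1) ^ ((1/2) : ℝ) * (-χ * t + 1 - 1 + χ) ^ (-(1/4) : ℝ)
        * (1 - (-χ * t + 1)) ^ (-(1/4) : ℝ)
      = χ ^ (-(1/2):ℝ) * (t ^ (-(1/4):ℝ) * (1-t) ^ (-(1/4):ℝ) * (1 - χ*t) ^ ((1/2):ℝ)) := by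
    intro t ht
    rw [Set.uIcc_of_le (by norm_num)] at ht
    have e1 : -χ * t + 1 - 1 + χ = χ * (1 - t) := by ring
    have e2 : 1 - (-χ * t + 1) = χ * t := by ring
    have e3 : -χ * t + 1 = 1 - χ * t := by ring
    rw [e1, e2, e3, Real.mul_rpow h0.le (by linarith [ht.2]), Real.mul_rpow h0.le ht.1]
    have e4 : χ ^ (-(1/4):ℝ) * χ ^ (-(1/4):ℝ) = χ ^ (-(1/2):ℝ) := by
      rw [← Real.rpow_add h0]; norm_num
    calc (1 - χ*t) ^ ((1/2):ℝ) * (χ ^ (-(1/4):ℝ) * (1-t) ^ (-(1/4):ℝ))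
          * (χ ^ (-(1/4):ℝ) * t ^ (-(1/4):ℝ))
        = (χ ^ (-(1/4):ℝ) * χ ^ (-(1/4):ℝ))
          * (t ^ (-(1/4):ℝ) * (1-t) ^ (-(1/4):ℝ) * (1 - χ*t) ^ ((1/2):ℝ)) := by ring
      _ = χ ^ (-(1/2):ℝ) * (t ^ (-(1/4):ℝ) * (1-t) ^ (-(1/4):ℝ) * (1 - χ*t) ^ ((1/2):ℝ)) := by
          rw [e4]
  have hJT : J = χ ^ (-(1/2):ℝ) * T := by
    rw [hJ, intervalIntegral.integral_congr hcong, intervalIntegral.integral_const_mul, hT]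
  have hhalf : χ ^ (-(1/2):ℝ) * χ ^ (-(1/2):ℝ) = χ⁻¹ := by
    rw [← Real.rpow_add h0]
    norm_num
    exact Real.rpow_neg_one χ
  rw [hI, hJT]
  calc χ ^ (-(1/2):ℝ) * (χ * (χ ^ (-(1/2):ℝ) * T))
      = (χ ^ (-(1/2):ℝ) * χ ^ (-(1/2):ℝ)) * χ * T := by ring
    _ = χ⁻¹ * χ * T := by rw [hhalf]
    _ = T := by field_simp



section main
variable {χ : ℝ}

noncomputable def FF (χ : ℝ) (n : ℕ) (t : ℝ) : ℝ :=
  (cc n * χ^n) * (t ^ (((n:ℝ) + 3/4) - 1) * (1-t) ^ ((3/4 : ℝ) - 1))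

lemma FF_integrableOn (hχ : χ ∈ Set.Ioo (0:ℝ) 1) (n : ℕ) :
    IntegrableOn (FF χ n) (Ioc (0:ℝ) 1) := by
  have h := (betaIntegrable (p := (n:ℝ) + 3/4) (q := 3/4) (by positivity) (by norm_num))
  rw [intervalIntegrable_iff_integrableOn_Ioc_of_le (by norm_num)] at h
  exact h.const_mul _

lemma FF_norm_integral (hχ : χ ∈ Set.Ioo (0:ℝ) 1) (n : ℕ) :
    ∫ t in Ioc (0:ℝ) 1, ‖FF χ n t‖
      ≤ χ^n * ∫ t in Ioc (0:ℝ) 1, t ^ ((3/4:ℝ) - 1) * (1-t) ^ ((3/4:ℝ) - 1) := by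
  obtain ⟨h0, h1⟩ := hχ
  have hint0 : IntegrableOn (fun t : ℝ => t ^ ((3/4:ℝ)-1) * (1-t) ^ ((3/4:ℝ)-1))
      (Ioc (0:ℝ) 1) := by
    have h := (betaIntegrable (p := (3/4:ℝ)) (q := 3/4) (by norm_num) (by norm_num))
    rwa [intervalIntegrable_iff_integrableOn_Ioc_of_le (by norm_num)] at h
  have step1 : ∫ t in Ioc (0:ℝ) 1, ‖FF χ n t‖
      ≤ ∫ t in Ioc (0:ℝ) 1, χ^n * (t ^ ((3/4:ℝ)-1) * (1-t) ^ ((3/4:ℝ)-1)) := by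
    apply setIntegral_mono_on (FF_integrableOn ⟨h0, h1⟩ n).norm (hint0.const_mul _)
      measurableSet_Ioc
    intro t ht
    rw [FF, norm_mul, norm_mul (cc n) (χ^n)]
    have ht1 : (0:ℝ) < t := ht.1
    have ht2 : t ≤ 1 := ht.2
    have hb1 : ‖t ^ (((n:ℝ) + 3/4) - 1)‖ ≤ t ^ ((3/4:ℝ) - 1) := by
      rw [Real.norm_of_nonneg (Real.rpow_nonneg ht1.le _)]
      apply Real.rpow_le_rpow_of_exponent_ge ht1 ht2
      have : (0:ℝ) ≤ (n:ℝ) := Nat.cast_nonneg n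
      linarith
    have hb2 : ‖(1-t) ^ ((3/4:ℝ)-1)‖ = (1-t) ^ ((3/4:ℝ)-1) :=
      Real.norm_of_nonneg (Real.rpow_nonneg (by linarith) _)
    have hb3 : ‖cc n‖ * ‖χ^n‖ ≤ χ^n := by
      calc ‖cc n‖ * ‖χ^n‖ ≤ 1 * ‖χ^n‖ :=
            mul_le_mul_of_nonneg_right (cc_abs_le n) (norm_nonneg _)
        _ = χ^n := by rw [one_mul, norm_pow, Real.norm_of_nonneg h0.le]
    have hmul : ‖t ^ (((n:ℝ) + 3/4) - 1)‖ * ‖(1-t) ^ ((3/4:ℝ)-1)‖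
        ≤ t ^ ((3/4:ℝ)-1) * (1-t) ^ ((3/4:ℝ)-1) := by
      rw [hb2]
      exact mul_le_mul_of_nonneg_right hb1 (Real.rpow_nonneg (by linarith) _)
    rw [norm_mul (t ^ (((n:ℝ) + 3/4) - 1))]
    exact mul_le_mul hb3 hmul (by positivity) (by positivity)
  rwa [MeasureTheory.integral_const_mul] at step1
end main


theorem stmt15' {χ : ℝ} (hχ : χ ∈ Set.Ioo (0:ℝ) 1) :
    (∫ t in (0:ℝ)..1, t ^ (-(1/4):ℝ) * (1-t) ^ (-(1/4):ℝ) * (1 - χ*t) ^ ((1/2):ℝ))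
      = 2 * (Real.Gamma (3/4)) ^ 2 / Real.sqrt Real.pi * hyp2F1 (-(1/2)) (3/4) (3/2) χ := by
  obtain ⟨h0, h1⟩ := hχ
  rw [intervalIntegral.integral_of_le (by norm_num : (0:ℝ) ≤ 1)]
  have hpt : ∀ t ∈ Ioc (0:ℝ) 1,
      t ^ (-(1/4):ℝ) * (1-t) ^ (-(1/4):ℝ) * (1 - χ*t) ^ ((1/2):ℝ)
        = ∑' n, FF χ n t := by
    intro t ht
    have hxt0 : 0 ≤ χ * t := mul_nonneg h0.le ht.1.le
    have hxt1 : χ * t < 1 := by nlinarith [ht.1, ht.2]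
    have hs := (binom_hasSum hxt0 hxt1).mul_left (t ^ (-(1/4):ℝ) * (1-t) ^ (-(1/4):ℝ))
    have heq : (fun n => t ^ (-(1/4):ℝ) * (1-t) ^ (-(1/4):ℝ) * (cc n * (χ*t)^n))
        = fun n => FF χ n t := by
      funext n
      rw [FF, mul_pow]
      have e1 : t ^ (((n:ℝ) + 3/4) - 1) = t ^ (n:ℕ) * t ^ (-(1/4):ℝ) := by
        rw [← Real.rpow_natCast t n, ← Real.rpow_add ht.1]
        congr 1
        ring
      have e2 : ((3/4:ℝ) - 1) = (-(1/4):ℝ) := by norm_num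
      rw [e1, e2]
      ring
    rw [heq] at hs
    exact hs.tsum_eq.symm
  rw [MeasureTheory.setIntegral_congr_fun measurableSet_Ioc hpt]
  rw [← MeasureTheory.integral_tsum_of_summable_integral_norm
    (fun n => FF_integrableOn ⟨h0, h1⟩ n) ?hsum]
  case hsum =>
    apply Summable.of_nonneg_of_le
      (fun n => MeasureTheory.integral_nonneg (fun t => norm_nonneg _))
      (fun n => FF_norm_integral ⟨h0, h1⟩ n)
    exact (summable_geometric_of_lt_one h0.le h1).mul_right _
  -- evaluate each integral
  have hval : ∀ n : ℕ, (∫ t in Ioc (0:ℝ) 1, FF χ n t)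
      = (cc n * χ^n) * (Real.Gamma ((n:ℝ) + 3/4) * Real.Gamma (3/4)
          / Real.Gamma (((n:ℝ) + 3/4) + 3/4)) := by
    intro n
    simp only [FF]
    rw [MeasureTheory.integral_const_mul,
      ← intervalIntegral.integral_of_le (by norm_num : (0:ℝ) ≤ 1),
      realBeta (by positivity) (by norm_num : (0:ℝ) < 3/4)]
  simp_rw [hval]
  rw [hyp2F1, ← tsum_mul_left]
  apply tsum_congr
  intro n
  have hG34 : Real.Gamma ((n:ℝ) + 3/4) = (ascPochhammer ℝ n).eval (3/4) * Real.Gamma (3/4) := by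
    rw [add_comm, Gamma_asc (by norm_num)]
  have hG32 : Real.Gamma (((n:ℝ) + 3/4) + 3/4)
      = (ascPochhammer ℝ n).eval (3/2) * (Real.sqrt Real.pi / 2) := by
    rw [show ((n:ℝ) + 3/4) + 3/4 = 3/2 + n by ring, Gamma_asc (by norm_num)]
    congr 1
    rw [show (3/2:ℝ) = 1/2 + 1 by norm_num, Real.Gamma_add_one (by norm_num),
      Real.Gamma_one_half_eq]
    ring
  rw [hG34, hG32, cc]
  have hQ : (0:ℝ) < (ascPochhammer ℝ n).eval (3/2) := asc_pos (by norm_num) n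
  have hf : (0:ℝ) < (n.factorial : ℝ) := by exact_mod_cast n.factorial_pos
  have hs : (0:ℝ) < Real.sqrt Real.pi := Real.sqrt_pos.mpr Real.pi_pos
  field_simp

end SLEaux

/-- For every χ ∈ (0,1),
χ^{−1/2} · ∫_{1−χ}^1 ζ^{1/2} (ζ−1+χ)^{−1/4} (1−ζ)^{−1/4} dζ
  = (2·Γ(3/4)²/√π)·₂F₁(−1/2, 3/4; 3/2; χ). -/

theorem stmt15 (χ : ℝ) (hχ : χ ∈ Set.Ioo (0 : ℝ) 1) :
    χ ^ (-(1/2) : ℝ) * Bint χ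
      = 2 * (Real.Gamma (3/4)) ^ 2 / Real.sqrt Real.pi * hyp2F1 (-(1/2)) (3/4) (3/2) χ := by
  rw [subst hχ]
  exact stmt15' hχ
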